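/- Let g be a stratified Lie algebra and s ⊆ g a subset such that exp(s) is a closed semigroup. If X ∈ w(s) and Y ∈ e(s) satisfy ad_Y^2(X) ∈ e(s), then [X,Y] ∈ e(s). -/

import Mathlib

/-- The tangent wedge of a subset `s` of a Lie algebra: `w(s) = {X : ℝ₊ X ⊆ s}`. -/
def wedge {L : Type} [LieRing L] [LieAlgebra ℝ L] (s : Set L) : Set L :=
  {X : L | ∀ t : ℝ, 0 < t → t • X ∈ s}

/-- The edge of the wedge of a subset `s` of a Lie algebra: `e(s) = {X : ℝ X ⊆ s}`. -/
def edge {L : Type} [LieRing L] [LieAlgebra ℝ L] (s : Set L) : Set L :=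
  {X : L | ∀ t : ℝ, t • X ∈ s}

/-- `e^{ad_X} Y`: the exponential series of the adjoint endomorphism `ad_X`,
applied to `Y`. -/
noncomputable def expAd {L : Type} [LieRing L] [LieAlgebra ℝ L] [TopologicalSpace L]
    (X Y : L) : L :=
  ∑' k : ℕ, ((k.factorial : ℝ)⁻¹ • ((LieAlgebra.ad ℝ L X) ^ k) Y)

/-- The span of all brackets `⁅x, y⁆` with `x ∈ A` and `y ∈ B`. -/
def lieSpan {L : Type} [LieRing L] [LieAlgebra ℝ L] (A B : Submodule ℝ L) :
    Submodule ℝ L :=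
  Submodule.span ℝ {z : L | ∃ x ∈ A, ∃ y ∈ B, z = ⁅x, y⁆}

/-- A stratification of step `s` on a Lie algebra `L`. -/
structure IsStratified (L : Type) [LieRing L] [LieAlgebra ℝ L]
    (s : ℕ) (V : ℕ → Submodule ℝ L) : Prop where
  pos : 0 < s
  last_ne_bot : V s ≠ ⊥
  zero_bot : V 0 = ⊥
  gt_bot : ∀ j, s < j → V j = ⊥
  iSup_eq_top : (⨆ j, V j) = ⊤
  indep : ∀ j, Disjoint (V j) (⨆ k, ⨆ _ : k ≠ j, V k)
  layer : ∀ j, 1 ≤ j → j < s → lieSpan (V 1) (V j) = V (j + 1)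
  last : lieSpan (V 1) (V s) = ⊥

section Nilp
variable {L : Type} [LieRing L] [LieAlgebra ℝ L]

/-- `Fl V m = ⨆ k ≥ m, V k`. -/
def Fl (V : ℕ → Submodule ℝ L) (m : ℕ) : Submodule ℝ L := ⨆ k, ⨆ (_ : m ≤ k), V k

lemma V_le_Fl (V : ℕ → Submodule ℝ L) {m k : ℕ} (h : m ≤ k) : V k ≤ Fl V m :=
  le_iSup₂_of_le k h le_rfl

lemma Fl_anti (V : ℕ → Submodule ℝ L) {m m' : ℕ} (h : m ≤ m') : Fl V m' ≤ Fl V m :=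
  iSup₂_le fun k hk => V_le_Fl V (h.trans hk)

lemma bracket_one_pt {st : ℕ} {V : ℕ → Submodule ℝ L} (hst : IsStratified L st V)
    {k : ℕ} {x y : L} (hx : x ∈ V 1) (hy : y ∈ V k) : ⁅x, y⁆ ∈ Fl V (1 + k) := by
  rcases Nat.eq_zero_or_pos k with hk | hk
  · subst hk
    rw [hst.zero_bot] at hy
    simp only [Submodule.mem_bot] at hy
    simp [hy]
  rcases lt_trichotomy k st with h | h | h
  · have : ⁅x, y⁆ ∈ lieSpan (V 1) (V k) :=
      Submodule.subset_span ⟨x, hx, y, hy, rfl⟩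
    rw [hst.layer k hk h] at this
    exact V_le_Fl V (by omega) this
  · subst h
    have : ⁅x, y⁆ ∈ lieSpan (V 1) (V k) :=
      Submodule.subset_span ⟨x, hx, y, hy, rfl⟩
    rw [hst.last] at this
    simp only [Submodule.mem_bot] at this
    simp [this]
  · rw [hst.gt_bot k h] at hy
    simp only [Submodule.mem_bot] at hy
    simp [hy]

/-- lift pointwise bracket bound to `Fl` in the second argument -/
lemma bracket_lift {V : ℕ → Submodule ℝ L} {i : ℕ}
    (hpt : ∀ (k : ℕ) (x y : L), x ∈ V i → y ∈ V k → ⁅x, y⁆ ∈ Fl V (i + k))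
    {m : ℕ} {x y : L} (hx : x ∈ V i) (hy : y ∈ Fl V m) : ⁅x, y⁆ ∈ Fl V (i + m) := by
  have : Fl V m ≤ Submodule.comap (LieAlgebra.ad ℝ L x) (Fl V (i + m)) := by
    refine iSup₂_le fun k hk => fun z hz => ?_
    simp only [Submodule.mem_comap, LieAlgebra.ad_apply]
    exact Fl_anti V (by omega) (hpt k x z hx hz)
  simpa using this hy

lemma bracket_pt {st : ℕ} {V : ℕ → Submodule ℝ L} (hst : IsStratified L st V) :
    ∀ (i k : ℕ) (x y : L), x ∈ V i → y ∈ V k → ⁅x, y⁆ ∈ Fl V (i + k) := by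
  intro i
  induction i with
  | zero =>
    intro k x y hx _
    rw [hst.zero_bot] at hx
    simp only [Submodule.mem_bot] at hx
    simp [hx]
  | succ i ih =>
    rcases Nat.eq_zero_or_pos i with hi | hi
    · subst hi
      intro k x y hx hy
      exact bracket_one_pt hst hx hy
    intro k x y hx hy
    rcases le_or_gt st i with h | h
    · rw [hst.gt_bot (i+1) (by omega)] at hx
      simp only [Submodule.mem_bot] at hx
      simp [hx]
    · rw [← hst.layer i hi h] at hx
      induction hx using Submodule.span_induction with
      | mem z hz =>
        obtain ⟨a, ha, b, hb, rfl⟩ := hz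
        rw [lie_lie]
        have h1 : ⁅b, y⁆ ∈ Fl V (i + k) := ih k b y hb hy
        have h2 : ⁅a, ⁅b, y⁆⁆ ∈ Fl V (1 + (i + k)) :=
          bracket_lift (fun k x y hx hy => bracket_one_pt hst hx hy) ha h1
        have h3 : ⁅a, y⁆ ∈ Fl V (1 + k) := bracket_one_pt hst ha hy
        have h4 : ⁅b, ⁅a, y⁆⁆ ∈ Fl V (i + (1 + k)) := bracket_lift ih hb h3
        have e1 : 1 + (i + k) = i + 1 + k := by omega
        have e2 : i + (1 + k) = i + 1 + k := by omega
        rw [e1] at h2; rw [e2] at h4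
        exact sub_mem h2 h4
      | zero => simp
      | add a b _ _ hpa hpb => rw [add_lie]; exact add_mem hpa hpb
      | smul c a _ hpa => rw [smul_lie]; exact Submodule.smul_mem _ c hpa

lemma Fl_one_top {st : ℕ} {V : ℕ → Submodule ℝ L} (hst : IsStratified L st V) :
    Fl V 1 = ⊤ := by
  rw [eq_top_iff, ← hst.iSup_eq_top]
  refine iSup_le fun j => ?_
  rcases Nat.eq_zero_or_pos j with hj | hj
  · subst hj; rw [hst.zero_bot]; exact bot_le
  · exact V_le_Fl V hj

lemma ad_pow_mem {st : ℕ} {V : ℕ → Submodule ℝ L} (hst : IsStratified L st V)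
    (Y : L) : ∀ (n : ℕ) (Z : L), ((LieAlgebra.ad ℝ L Y) ^ n) Z ∈ Fl V (1 + n) := by
  intro n
  induction n with
  | zero =>
    intro Z
    simp only [pow_zero, Module.End.one_apply]
    rw [Fl_one_top hst]; trivial
  | succ n ih =>
    intro Z
    rw [pow_succ']
    simp only [Module.End.mul_apply, LieAlgebra.ad_apply]
    set w := ((LieAlgebra.ad ℝ L Y) ^ n) Z with hw
    have hwm : w ∈ Fl V (1 + n) := ih Z
    have hY : Y ∈ Fl V 1 := by rw [Fl_one_top hst]; trivial
    have : Fl V 1 ≤ Submodule.comap (-(LieAlgebra.ad ℝ L w)) (Fl V (1 + (n+1))) := by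
      refine iSup₂_le fun j hj => fun x hx => ?_
      simp only [Submodule.mem_comap, LinearMap.neg_apply, LieAlgebra.ad_apply,
        ← lie_skew x w]
      have : ⁅x, w⁆ ∈ Fl V (j + (1 + n)) :=
        bracket_lift (fun k a b ha hb => bracket_pt hst j k a b ha hb) hx hwm
      simpa using Fl_anti V (by omega) this
    have h5 := this hY
    simp only [Submodule.mem_comap, LinearMap.neg_apply, LieAlgebra.ad_apply] at h5
    rw [← lie_skew w Y] at h5
    simpa using h5

lemma ad_nilpotent {st : ℕ} {V : ℕ → Submodule ℝ L} (hst : IsStratified L st V)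
    (Y Z : L) {k : ℕ} (hk : st ≤ k) : ((LieAlgebra.ad ℝ L Y) ^ k) Z = 0 := by
  have h1 := ad_pow_mem hst Y k Z
  have h2 : Fl V (1 + k) ≤ ⊥ := by
    refine iSup₂_le fun j hj => ?_
    rw [hst.gt_bot j (by omega)]
  simpa using h2 h1

end Nilp

section Poly
variable {L : Type} [AddCommGroup L] [Module ℝ L]
  [TopologicalSpace L] [IsTopologicalAddGroup L] [ContinuousSMul ℝ L]

/-- coefficients of a polynomial curve lying in a closed submodule lie in the submodule -/
lemma coeff_mem_of_closed (M : Submodule ℝ L) (hM : IsClosed (M : Set L)) :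
    ∀ (K : ℕ) (D : ℕ → L),
      (∀ t : ℝ, (∑ k ∈ Finset.range K, t ^ k • D k) ∈ M) → ∀ k < K, D k ∈ M := by
  intro K
  induction K with
  | zero => intro D _ k hk; omega
  | succ K ih =>
    intro D hD
    have h0 : D 0 ∈ M := by
      have := hD 0
      rw [Finset.sum_range_succ'] at this
      simpa using this
    have hg : ∀ t : ℝ, (∑ k ∈ Finset.range K, t ^ k • D (k + 1)) ∈ M := by
      have hne : ∀ t : ℝ, t ≠ 0 → (∑ k ∈ Finset.range K, t ^ k • D (k + 1)) ∈ M := by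
        intro t ht
        have hp := hD t
        rw [Finset.sum_range_succ'] at hp
        have he : (∑ k ∈ Finset.range K, t ^ (k + 1) • D (k + 1)) + t ^ 0 • D 0
            = t • (∑ k ∈ Finset.range K, t ^ k • D (k + 1)) + D 0 := by
          rw [Finset.smul_sum]
          simp [pow_succ, mul_comm, mul_smul]
        rw [he] at hp
        have h1 : t • (∑ k ∈ Finset.range K, t ^ k • D (k + 1)) ∈ M := by
          have := M.sub_mem hp h0
          simpa using this
        have := M.smul_mem t⁻¹ h1
        rwa [smul_smul, inv_mul_cancel₀ ht, one_smul] at this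
      intro t
      rcases eq_or_ne t 0 with rfl | ht
      · have hcont : Continuous fun t : ℝ => ∑ k ∈ Finset.range K, t ^ k • D (k + 1) :=
          continuous_finset_sum _ fun k _ => (continuous_pow k).smul continuous_const
        have htd : Filter.Tendsto (fun t : ℝ => ∑ k ∈ Finset.range K, t ^ k • D (k + 1))
            (nhdsWithin 0 {(0:ℝ)}ᶜ) (nhds (∑ k ∈ Finset.range K, (0:ℝ) ^ k • D (k + 1))) :=
          (hcont.tendsto 0).mono_left nhdsWithin_le_nhds
        exact hM.mem_of_tendsto htd
          (Filter.eventually_of_mem self_mem_nhdsWithin fun u hu => hne u hu)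
      · exact hne t ht
    intro k hk
    rcases k with _ | j
    · exact h0
    · exact ih (fun k => D (k + 1)) hg j (by omega)

/-- if a tsum lies in a closed set and the function is supported in `range K`,
then the finite sum lies in the set. -/
lemma finsum_mem_of_tsum_mem {C : Set L} (hC : IsClosed C) (g : ℕ → L) (K : ℕ)
    (hg : ∀ k, k ∉ Finset.range K → g k = 0) (h : (∑' k, g k) ∈ C) :
    (∑ k ∈ Finset.range K, g k) ∈ C := by
  set S := ∑ k ∈ Finset.range K, g k with hS
  have hHS : HasSum g S := hasSum_sum_of_ne_finset_zero hg
  have hsumm : Summable g := ⟨S, hHS⟩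
  have hT : HasSum g (∑' k, g k) := hsumm.hasSum
  have hev : ∀ᶠ fs in Filter.atTop, (∑ k ∈ fs, g k) ∈ ({S} : Set L) := by
    refine Filter.eventually_atTop.2 ⟨Finset.range K, fun fs hfs => ?_⟩
    exact (Finset.sum_subset hfs fun x _ hx => hg x hx).symm
  have hmem : (∑' k, g k) ∈ closure ({S} : Set L) := mem_closure_of_tendsto hT hev
  have hψ : Continuous fun x : L => (S + ∑' k, g k) - x :=
    continuous_const.sub continuous_id
  have himg : (fun x : L => (S + ∑' k, g k) - x) '' closure ({S} : Set L)
      ⊆ closure ((fun x : L => (S + ∑' k, g k) - x) '' {S}) :=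
    image_closure_subset_closure_image hψ
  have h2 : S ∈ closure ({∑' k, g k} : Set L) := by
    have := himg ⟨_, hmem, rfl⟩
    simpa [add_sub_cancel_right] using this
  exact hC.closure_eq ▸ closure_mono (Set.singleton_subset_iff.2 h) h2

end Poly

/-- Let `g` be a stratified Lie algebra (with simply connected group `G` and injective
exponential map) and `s ⊆ g` a subset such that `exp(s)` is a closed semigroup. If
`X ∈ w(s)` and `Y ∈ e(s)` satisfy `ad_Y² X ∈ e(s)`, then `[X,Y] ∈ e(s)`. -/
theorem bracket_in_edge_of_adsq_in_edge
    (L : Type) [LieRing L] [LieAlgebra ℝ L] [FiniteDimensional ℝ L]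
    [TopologicalSpace L] [IsTopologicalAddGroup L] [ContinuousSMul ℝ L]
    (st : ℕ) (V : ℕ → Submodule ℝ L) (hst : IsStratified L st V)
    (G : Type) [Group G] [TopologicalSpace G] [IsTopologicalGroup G]
    (exp : L → G)
    (hcont : Continuous exp)
    (hinj : Function.Injective exp)
    (hline : ∀ (X : L) (t u : ℝ), exp ((t + u) • X) = exp (t • X) * exp (u • X))
    (hconj : ∀ X Y : L, exp X * exp Y * (exp X)⁻¹ = exp (expAd X Y))
    (htrot : ∀ X Y : L, Filter.Tendsto
      (fun n : ℕ => (exp ((n : ℝ)⁻¹ • X) * exp ((n : ℝ)⁻¹ • Y)) ^ n)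
      Filter.atTop (nhds (exp (X + Y))))
    (s : Set L)
    (hsem : ∀ x ∈ s, ∀ y ∈ s, ∃ z ∈ s, exp x * exp y = exp z)
    (hcl : IsClosed (exp '' s))
    (X Y : L) (hX : X ∈ wedge s) (hY : Y ∈ edge s)
    (hadsq : ⁅Y, ⁅Y, X⁆⁆ ∈ edge s) :
    ⁅X, Y⁆ ∈ edge s := by
  classical
  set A := LieAlgebra.ad ℝ L Y with hA
  have h0s : (0 : L) ∈ s := by simpa using hY 0
  have hexp0 : exp 0 = 1 := by
    have h := hline 0 0 0
    simp only [add_zero, zero_smul] at h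
    exact (left_eq_mul.mp h)
  have hexpinv : ∀ v : L, (exp v)⁻¹ = exp (-v) := by
    intro v
    have h := hline v 1 (-1)
    simp only [add_neg_cancel, zero_smul, one_smul, neg_smul] at h
    rw [hexp0] at h
    exact inv_eq_of_mul_eq_one_right h.symm
  have hs_closed : IsClosed s := by
    have hse : s = exp ⁻¹' (exp '' s) := by
      ext x
      constructor
      · exact fun hx => ⟨x, hx, rfl⟩
      · rintro ⟨z, hz, hzx⟩
        rwa [← hinj hzx]
    rw [hse]
    exact hcl.preimage hcont
  have hconj_mem : ∀ (c : ℝ) (Z : L), Z ∈ s → expAd (c • Y) Z ∈ s := by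
    intro c Z hZ
    obtain ⟨w, hw, hw2⟩ := hsem (c • Y) (hY c) Z hZ
    obtain ⟨w', hw', hw'2⟩ := hsem w hw ((-c) • Y) (hY (-c))
    have h := hconj (c • Y) Z
    rw [hexpinv, ← neg_smul] at h
    rw [hw2, hw'2] at h
    rwa [← hinj h]
  have hnil : ∀ (Z : L) (k : ℕ), st ≤ k → (A ^ k) Z = 0 :=
    fun Z k hk => ad_nilpotent hst Y Z hk
  set K := st + 2 with hK
  have hsum_mem : ∀ (c : ℝ) (Z : L), Z ∈ s →
      (∑ k ∈ Finset.range K, ((k.factorial : ℝ)⁻¹ * c ^ k) • ((A ^ k) Z)) ∈ s := by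
    intro c Z hZ
    have hmem := hconj_mem c Z hZ
    have hterm : ∀ k : ℕ, ((k.factorial : ℝ)⁻¹ • ((LieAlgebra.ad ℝ L (c • Y)) ^ k) Z)
        = ((k.factorial : ℝ)⁻¹ * c ^ k) • ((A ^ k) Z) := by
      intro k
      have hadc : LieAlgebra.ad ℝ L (c • Y) = c • A := by
        rw [hA, map_smul]
      rw [hadc, smul_pow, LinearMap.smul_apply, smul_smul]
    rw [expAd, tsum_congr hterm] at hmem
    refine finsum_mem_of_tsum_mem hs_closed _ K (fun k hk => ?_) hmem
    have hz : (A ^ k) Z = 0 := by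
      refine hnil Z k ?_
      simp only [Finset.mem_range, not_lt] at hk
      omega
    simp [hz]
  have hW_scale : ∀ (c : ℝ), 0 < c → ∀ v ∈ wedge s, c • v ∈ wedge s := by
    intro c hc v hv t ht
    rw [smul_smul]
    exact hv _ (mul_pos ht hc)
  have hpow : ∀ d ∈ s, ∀ n : ℕ, 1 ≤ n → ∃ c ∈ s, (exp d) ^ n = exp c := by
    intro d hd n hn
    induction n with
    | zero => omega
    | succ n ih =>
      rcases Nat.eq_zero_or_pos n with rfl | hn'
      · exact ⟨d, hd, by simp⟩
      · obtain ⟨c, hc, hc2⟩ := ih hn'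
        obtain ⟨e, he, he2⟩ := hsem c hc d hd
        exact ⟨e, he, by rw [pow_succ, hc2, he2]⟩
  have hWadd : ∀ a ∈ wedge s, ∀ b ∈ wedge s, a + b ∈ wedge s := by
    intro a ha b hb t ht
    have htr := htrot (t • a) (t • b)
    have hev : ∀ᶠ n : ℕ in Filter.atTop,
        (exp ((n : ℝ)⁻¹ • (t • a)) * exp ((n : ℝ)⁻¹ • (t • b))) ^ n ∈ exp '' s := by
      refine Filter.eventually_atTop.2 ⟨1, fun n hn => ?_⟩
      have hnpos : (0 : ℝ) < (n : ℝ)⁻¹ := by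
        have : (0 : ℝ) < (n : ℝ) := by exact_mod_cast hn
        positivity
      have ha' : (n : ℝ)⁻¹ • (t • a) ∈ s := by
        rw [smul_smul]
        exact ha _ (mul_pos hnpos ht)
      have hb' : (n : ℝ)⁻¹ • (t • b) ∈ s := by
        rw [smul_smul]
        exact hb _ (mul_pos hnpos ht)
      obtain ⟨w, hw, hw2⟩ := hsem _ ha' _ hb'
      obtain ⟨c, hc, hc2⟩ := hpow w hw n hn
      rw [hw2, hc2]
      exact ⟨c, hc, rfl⟩
    have hlim : exp (t • a + t • b) ∈ exp '' s := hcl.mem_of_tendsto htr hev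
    obtain ⟨c, hc, hc2⟩ := hlim
    have hce : t • (a + b) = c := hinj (by rw [smul_add]; exact hc2.symm)
    rw [hce]
    exact hc
  have hE_zero : (0 : L) ∈ edge s := fun t => by simpa using h0s
  have hE_neg : ∀ v ∈ edge s, -v ∈ edge s := by
    intro v hv t
    rw [smul_neg, ← neg_smul]
    exact hv (-t)
  have hEW : edge s ⊆ wedge s := fun v hv t _ => hv t
  have hE_add : ∀ a ∈ edge s, ∀ b ∈ edge s, a + b ∈ edge s := by
    intro a ha b hb t
    rcases lt_trichotomy t 0 with h | h | h
    · have hm := hWadd _ (hEW (hE_neg a ha)) _ (hEW (hE_neg b hb)) (-t) (by linarith)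
      have : t • (a + b) = (-t) • (-a + -b) := by
        rw [smul_add, smul_add, smul_neg, smul_neg, neg_smul, neg_smul, neg_neg, neg_neg]
      rw [this]
      exact hm
    · simpa [h] using h0s
    · exact hWadd _ (hEW ha) _ (hEW hb) t h
  have hE_smul : ∀ (c : ℝ), ∀ a ∈ edge s, c • a ∈ edge s := by
    intro c a ha t
    rw [smul_smul]
    exact ha _
  set Esub : Submodule ℝ L :=
    { carrier := edge s
      zero_mem' := hE_zero
      add_mem' := fun ha hb => hE_add _ ha _ hb
      smul_mem' := fun c a ha => hE_smul c a ha } with hEsub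
  have hW_closed : IsClosed (wedge s) := by
    have hwe : wedge s = ⋂ (t : ℝ), ⋂ (_ : 0 < t), (fun x : L => t • x) ⁻¹' s := by
      ext x
      simp only [wedge, Set.mem_setOf_eq, Set.mem_iInter, Set.mem_preimage]
    rw [hwe]
    exact isClosed_iInter fun t => isClosed_iInter fun _ =>
      hs_closed.preimage (continuous_const_smul t)
  have hE_closed : IsClosed (edge s) := by
    have hee : edge s = ⋂ (t : ℝ), (fun x : L => t • x) ⁻¹' s := by
      ext x
      simp only [edge, Set.mem_setOf_eq, Set.mem_iInter, Set.mem_preimage]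
    rw [hee]
    exact isClosed_iInter fun t => hs_closed.preimage (continuous_const_smul t)
  have hcurveS : ∀ (Z : L), Z ∈ edge s → ∀ t : ℝ,
      (∑ k ∈ Finset.range K, ((k.factorial : ℝ)⁻¹ * t ^ k) • ((A ^ k) Z)) ∈ edge s := by
    intro Z hZ t u
    have hm := hsum_mem t (u • Z) (hZ u)
    have hterm : ∀ k ∈ Finset.range K,
        ((k.factorial : ℝ)⁻¹ * t ^ k) • ((A ^ k) (u • Z))
          = u • (((k.factorial : ℝ)⁻¹ * t ^ k) • ((A ^ k) Z)) := by
      intro k _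
      rw [map_smul, smul_comm]
    rw [Finset.sum_congr rfl hterm, ← Finset.smul_sum] at hm
    exact hm
  have hcurveW : ∀ t : ℝ,
      (∑ k ∈ Finset.range K, ((k.factorial : ℝ)⁻¹ * t ^ k) • ((A ^ k) X)) ∈ wedge s := by
    intro t u hu
    have hm := hsum_mem t (u • X) (hX u hu)
    have hterm : ∀ k ∈ Finset.range K,
        ((k.factorial : ℝ)⁻¹ * t ^ k) • ((A ^ k) (u • X))
          = u • (((k.factorial : ℝ)⁻¹ * t ^ k) • ((A ^ k) X)) := by
      intro k _
      rw [map_smul, smul_comm]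
    rw [Finset.sum_congr rfl hterm, ← Finset.smul_sum] at hm
    exact hm
  have hEinv : ∀ Z ∈ edge s, ∀ k : ℕ, (A ^ k) Z ∈ edge s := by
    intro Z hZ k
    rcases lt_or_ge k K with hk | hk
    · have hcurve : ∀ t : ℝ,
          (∑ j ∈ Finset.range K, t ^ j • ((j.factorial : ℝ)⁻¹ • ((A ^ j) Z))) ∈ Esub := by
        intro t
        have hm := hcurveS Z hZ t
        have hterm : ∀ j ∈ Finset.range K,
            ((j.factorial : ℝ)⁻¹ * t ^ j) • ((A ^ j) Z)
              = t ^ j • ((j.factorial : ℝ)⁻¹ • ((A ^ j) Z)) := by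
          intro j _
          rw [smul_smul, mul_comm]
        rw [Finset.sum_congr rfl hterm] at hm
        exact hm
      have hcoef := coeff_mem_of_closed Esub hE_closed K
        (fun j => (j.factorial : ℝ)⁻¹ • ((A ^ j) Z)) hcurve k hk
      have hmul := Esub.smul_mem (k.factorial : ℝ) hcoef
      rwa [smul_smul, mul_inv_cancel₀ (by exact_mod_cast k.factorial_ne_zero), one_smul] at hmul
    · have hz : (A ^ k) Z = 0 := hnil Z k (le_trans (Nat.le_add_right st 2) hk)
      rw [hz]
      exact hE_zero
  have hB2 : (A ^ 2) X ∈ edge s := by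
    have h2 : (A ^ 2) X = ⁅Y, ⁅Y, X⁆⁆ := by
      rw [pow_two, Module.End.mul_apply, hA]
      simp [LieAlgebra.ad_apply]
    rw [h2]
    exact hadsq
  have hBk : ∀ k : ℕ, 2 ≤ k → (A ^ k) X ∈ edge s := by
    intro k hk
    have hsplit : (A ^ k) X = (A ^ (k - 2)) ((A ^ 2) X) := by
      have he : k - 2 + 2 = k := by omega
      rw [← Module.End.mul_apply, ← pow_add, he]
    rw [hsplit]
    exact hEinv _ hB2 _
  have hkey : ∀ t : ℝ, X + t • ⁅Y, X⁆ ∈ wedge s := by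
    intro t
    have hp := hcurveW t
    set f : ℕ → L := fun k => ((k.factorial : ℝ)⁻¹ * t ^ k) • ((A ^ k) X) with hf
    have hsplit : ∑ k ∈ Finset.range K, f k
        = ((∑ k ∈ Finset.range st, f (k + 1 + 1)) + f (0 + 1)) + f 0 := by
      rw [hK, Finset.sum_range_succ', Finset.sum_range_succ']
    have hR : (∑ k ∈ Finset.range st, f (k + 1 + 1)) ∈ edge s := by
      refine Esub.sum_mem fun k _ => ?_
      exact hE_smul _ _ (hBk (k + 1 + 1) (by omega))
    have hf0 : f 0 = X := by simp [hf]
    have hf1 : f (0 + 1) = t • ⁅Y, X⁆ := by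
      simp [hf, hA, LieAlgebra.ad_apply]
    have heq : X + t • ⁅Y, X⁆
        = (∑ k ∈ Finset.range K, f k) + (-(∑ k ∈ Finset.range st, f (k + 1 + 1))) := by
      rw [hsplit, hf0, hf1]
      abel
    rw [heq]
    exact hWadd _ hp _ (hEW (hE_neg _ hR))
  have hbrW : ⁅Y, X⁆ ∈ wedge s := by
    have hmem : ∀ n : ℕ, 1 ≤ n → (n : ℝ)⁻¹ • X + ⁅Y, X⁆ ∈ wedge s := by
      intro n hn
      have hnpos : (0 : ℝ) < (n : ℝ)⁻¹ := by
        have : (0 : ℝ) < (n : ℝ) := by exact_mod_cast hn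
        positivity
      have hm := hW_scale _ hnpos _ (hkey (n : ℝ))
      rwa [smul_add, smul_smul, inv_mul_cancel₀ (by exact_mod_cast Nat.one_le_iff_ne_zero.mp hn),
        one_smul] at hm
    have htend : Filter.Tendsto (fun n : ℕ => (n : ℝ)⁻¹ • X + ⁅Y, X⁆)
        Filter.atTop (nhds ⁅Y, X⁆) := by
      have h1 := (tendsto_inv_atTop_nhds_zero_nat (𝕜 := ℝ)).smul_const X
      rw [zero_smul] at h1
      have h2 := h1.add (tendsto_const_nhds (x := ⁅Y, X⁆))
      rwa [zero_add] at h2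
    exact hW_closed.mem_of_tendsto htend (Filter.eventually_atTop.2 ⟨1, hmem⟩)
  have hbrW' : -⁅Y, X⁆ ∈ wedge s := by
    have hmem : ∀ n : ℕ, 1 ≤ n → (n : ℝ)⁻¹ • X + -⁅Y, X⁆ ∈ wedge s := by
      intro n hn
      have hnpos : (0 : ℝ) < (n : ℝ)⁻¹ := by
        have : (0 : ℝ) < (n : ℝ) := by exact_mod_cast hn
        positivity
      have hm := hW_scale _ hnpos _ (hkey (-(n : ℝ)))
      rw [smul_add, smul_smul] at hm
      have hne : (n : ℝ) ≠ 0 := by exact_mod_cast Nat.one_le_iff_ne_zero.mp hn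
      have hcalc : (n : ℝ)⁻¹ * -(n : ℝ) = -1 := by
        field_simp
      rw [hcalc, neg_one_smul] at hm
      exact hm
    have htend : Filter.Tendsto (fun n : ℕ => (n : ℝ)⁻¹ • X + -⁅Y, X⁆)
        Filter.atTop (nhds (-⁅Y, X⁆)) := by
      have h1 := (tendsto_inv_atTop_nhds_zero_nat (𝕜 := ℝ)).smul_const X
      rw [zero_smul] at h1
      have h2 := h1.add (tendsto_const_nhds (x := -⁅Y, X⁆))
      rwa [zero_add] at h2
    exact hW_closed.mem_of_tendsto htend (Filter.eventually_atTop.2 ⟨1, hmem⟩)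
  have hfinal : ⁅X, Y⁆ = -⁅Y, X⁆ := (lie_skew X Y).symm
  rw [hfinal]
  intro t
  rcases lt_trichotomy t 0 with h | h | h
  · rw [smul_neg, ← neg_smul]
    exact hbrW _ (by linarith)
  · simpa [h] using h0s
  · exact hbrW' t h
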